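/- Let s_1, …, s_{n+1} be i.i.d. real-valued random variables whose common distribution is atomless, and let 1 ≤ k ≤ n. Then P( s_{n+1} ≤ s_{(k)} ) = k/(n+1), where s_{(k)} denotes the k-th smallest value among s_1, …, s_n. (Key step in the proof of Theorem 3.2: the probability that a fresh conformity score falls below the k-th empirical order statistic of n i.i.d. conformity scores is exactly k/(n+1).) -/

import Mathlib

open MeasureTheory ProbabilityTheory

/-- The `k`-th smallest value among `v 0, …, v (n-1)` (1-indexed: `k = 1` gives the minimum). -/
noncomputable def kthSmallest {n : ℕ} (v : Fin n → ℝ) (k : ℕ) : ℝ :=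
  ((List.ofFn v).mergeSort (· ≤ ·)).getD (k - 1) 0

lemma countP_ofFn {n : ℕ} (v : Fin n → ℝ) (p : ℝ → Bool) :
    (List.ofFn v).countP p = ∑ i : Fin n, if p (v i) then 1 else 0 := by
  induction n with
  | zero => simp
  | succ m ih =>
      rw [List.ofFn_succ, List.countP_cons, ih, Fin.sum_univ_succ]
      ring

lemma sorted_getElem_lt_iff (l : List ℝ) (y : ℝ)
    (hs : List.Pairwise (fun a b => decide (a ≤ b) = true) l)
    (m : ℕ) (hm : m < l.length) :
    l[m] < y ↔ m + 1 ≤ l.countP (fun a => decide (a < y)) := by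
  have hs' : l.Pairwise (· ≤ ·) := by
    simpa using hs
  constructor
  · intro h
    calc m + 1 = (l.take (m+1)).countP (fun a => decide (a < y)) := by
          rw [List.countP_eq_length.2, List.length_take]
          · omega
          · intro a ha
            rcases List.mem_iff_getElem.1 ha with ⟨i, hi, rfl⟩
            have hi' : i < l.length := lt_of_lt_of_le hi (by simp [List.length_take])
            have : l.get ⟨i, hi'⟩ ≤ l.get ⟨m, hm⟩ := by
              apply hs'.rel_get_of_le
              simp only [Fin.mk_le_mk]
              have := List.length_take (i := m+1) (l := l)
              omega
            simp only [List.getElem_take, List.get_eq_getElem, decide_eq_true_eq] at *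
            exact lt_of_le_of_lt this h
      _ ≤ l.countP (fun a => decide (a < y)) := (List.take_sublist _ _).countP_le
  · intro h
    by_contra hlt
    push_neg at hlt
    have hdrop : (l.drop m).countP (fun a => decide (a < y)) = 0 := by
      rw [List.countP_eq_zero]
      intro a ha
      rcases List.mem_iff_getElem.1 ha with ⟨i, hi, rfl⟩
      have hmi : m + i < l.length := by
        have := List.length_drop (i := m) (l := l); omega
      have : l.get ⟨m, hm⟩ ≤ l.get ⟨m + i, hmi⟩ := by
        apply hs'.rel_get_of_le; simp
      simp only [List.getElem_drop, List.get_eq_getElem, decide_eq_true_eq] at *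
      push_neg
      exact le_trans hlt this
    have := List.countP_append (p := fun a => decide (a < y)) (l₁ := l.take m) (l₂ := l.drop m)
    rw [List.take_append_drop] at this
    have htake : (l.take m).countP (fun a => decide (a < y)) ≤ m := by
      calc (l.take m).countP _ ≤ (l.take m).length := List.countP_le_length
        _ ≤ m := by simp [List.length_take]
    omega

/-- characterization: `y ≤ kthSmallest v k ↔` fewer than `k` of the `v i` are `< y`. -/
lemma le_kthSmallest_iff {n : ℕ} (v : Fin n → ℝ) (k : ℕ) (hk1 : 1 ≤ k) (hkn : k ≤ n) (y : ℝ) :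
    y ≤ kthSmallest v k ↔ (Finset.univ.filter fun i => v i < y).card < k := by
  set l := (List.ofFn v).mergeSort (fun a b => decide (a ≤ b)) with hl
  have hlen : l.length = n := by simp [hl]
  have hm : k - 1 < l.length := by omega
  have hsort : List.Pairwise (fun a b => decide (a ≤ b) = true) l :=
    List.pairwise_mergeSort (le := fun a b => decide (a ≤ b))
      (by intro a b c; simp only [decide_eq_true_eq]; exact le_trans)
      (by intro a b; simpa using le_total a b) _
  have hcount : l.countP (fun a => decide (a < y))
      = (Finset.univ.filter fun i => v i < y).card := by
    rw [(List.mergeSort_perm (List.ofFn v) _).countP_eq, countP_ofFn, Finset.card_filter]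
    simp
  have : kthSmallest v k = l[k-1] := List.getD_eq_getElem l 0 hm
  rw [this]
  rw [← not_lt, sorted_getElem_lt_iff l y hsort (k-1) hm, hcount]
  omega

noncomputable def rnk {m : ℕ} (x : Fin m → ℝ) (i : Fin m) : ℕ :=
  (Finset.univ.filter fun j => x j < x i).card

lemma rnk_lt {m : ℕ} (x : Fin m → ℝ) (i : Fin m) : rnk x i < m := by
  have h : (Finset.univ.filter fun j => x j < x i) ⊆ Finset.univ.erase i := by
    intro j hj
    simp only [Finset.mem_filter] at hj
    refine Finset.mem_erase.2 ⟨?_, Finset.mem_univ _⟩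
    rintro rfl; exact lt_irrefl _ hj.2
  calc rnk x i ≤ (Finset.univ.erase i).card := Finset.card_le_card h
    _ < Finset.univ.card := Finset.card_erase_lt_of_mem (Finset.mem_univ i)
    _ = m := by simp

lemma rnk_injective {m : ℕ} (x : Fin m → ℝ) (hx : Function.Injective x) :
    Function.Injective (rnk x) := by
  have key : ∀ i j : Fin m, x i < x j → rnk x i < rnk x j := by
    intro i j hij
    apply Finset.card_lt_card
    rw [Finset.ssubset_iff_of_subset]
    · exact ⟨i, by simp [hij], by simp⟩
    · intro a ha
      simp only [Finset.mem_filter, Finset.mem_univ, true_and] at *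
      exact lt_trans ha hij
  intro i j hij
  by_contra hne
  rcases lt_or_gt_of_ne (fun h : x i = x j => hne (hx h)) with h | h
  · exact absurd hij (Nat.ne_of_lt (key _ _ h))
  · exact absurd hij.symm (Nat.ne_of_lt (key _ _ h))

lemma rnk_surj {m : ℕ} (x : Fin m → ℝ) (hx : Function.Injective x) (r : ℕ) (hr : r < m) :
    ∃ i, rnk x i = r := by
  have hbij : Function.Bijective (fun i => (⟨rnk x i, rnk_lt x i⟩ : Fin m)) := by
    apply Finite.injective_iff_bijective.1
    intro i j hij
    exact rnk_injective x hx (by simpa [Fin.mk_eq_mk] using hij)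
  rcases hbij.2 ⟨r, hr⟩ with ⟨i, hi⟩
  exact ⟨i, by simpa [Fin.mk_eq_mk] using hi⟩

lemma rnk_measurable {m : ℕ} (i : Fin m) : Measurable (fun x : Fin m → ℝ => rnk x i) := by
  have : (fun x : Fin m → ℝ => rnk x i)
      = fun x => ∑ j : Fin m, if x j < x i then 1 else 0 := by
    funext x; exact Finset.card_filter _ _
  rw [this]
  exact Finset.measurable_sum _ fun j _ =>
    Measurable.ite (measurableSet_lt (measurable_pi_apply j) (measurable_pi_apply i))
      measurable_const measurable_const

lemma rnk_comp {m : ℕ} (x : Fin m → ℝ) (σ : Equiv.Perm (Fin m)) (i : Fin m) :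
    rnk (x ∘ σ) i = rnk x (σ i) := by
  unfold rnk
  apply Finset.card_equiv σ
  intro j
  simp

lemma rnk_last {n : ℕ} (x : Fin (n + 1) → ℝ) :
    (Finset.univ.filter fun i : Fin n => x i.castSucc < x (Fin.last n)).card
      = rnk x (Fin.last n) := by
  unfold rnk
  rw [Finset.card_filter, Finset.card_filter, Fin.sum_univ_castSucc]
  simp

lemma diag_null (ν : Measure ℝ) [IsProbabilityMeasure ν] [NullSingletonClass ν] {m : ℕ} {i j : Fin m}
    (hij : i ≠ j) :
    Measure.pi (fun _ : Fin m => ν) {x | x i = x j} = 0 := by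
  classical
  set p : Fin m → Prop := fun l => l = i with hp
  have hji : ¬ p j := fun h => hij h.symm
  set e := MeasurableEquiv.piEquivPiSubtypeProd (fun _ : Fin m => ℝ) p with he
  have hmp := measurePreserving_piEquivPiSubtypeProd (fun _ : Fin m => ν) p
  set B : Set (({l // p l} → ℝ) × ({l // ¬ p l} → ℝ)) :=
    {q | q.1 ⟨i, rfl⟩ = q.2 ⟨j, hji⟩} with hB
  have hBmeas : MeasurableSet B :=
    measurableSet_eq_fun (measurable_fst.eval) (measurable_snd.eval)
  have hpre : ⇑e ⁻¹' B = {x | x i = x j} := rfl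
  rw [← hpre, hmp.measure_preimage hBmeas.nullMeasurableSet]
  rw [Measure.prod_apply hBmeas]
  have hzero : ∀ a : {l // p l} → ℝ,
      (Measure.pi fun _ : {l // ¬ p l} => ν) (Prod.mk a ⁻¹' B) = 0 := by
    intro a
    have : Prod.mk a ⁻¹' B = {b : {l // ¬ p l} → ℝ | b ⟨j, hji⟩ = a ⟨i, rfl⟩} := by
      ext b; simp [hB, eq_comm]
    rw [this]
    exact Measure.pi_hyperplane _ _ _
  simp [hzero]

/-- **Key step in the proof of Theorem 3.2.** If `s_1, …, s_{n+1}` are i.i.d. real random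
variables with atomless common distribution and `1 ≤ k ≤ n`, then the probability that the
fresh score `s_{n+1}` falls below the `k`-th smallest of `s_1, …, s_n` is exactly `k/(n+1)`. -/
theorem prob_le_kth_order_statistic
    {Ω : Type*} [MeasurableSpace Ω]
    (μ : Measure Ω) [IsProbabilityMeasure μ]
    (n : ℕ)
    (s : Fin (n + 1) → Ω → ℝ)
    (hmeas : ∀ i, Measurable (s i))
    (hindep : iIndepFun s μ)
    (hident : ∀ i, μ.map (s i) = μ.map (s 0))
    (hatomless : ∀ x : ℝ, μ {ω | s 0 ω = x} = 0)
    (k : ℕ) (hk1 : 1 ≤ k) (hkn : k ≤ n) :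
    (μ {ω | s (Fin.last n) ω ≤ kthSmallest (fun i : Fin n => s i.castSucc ω) k}).toReal
      = k / (n + 1) := by
  classical
  set ν : Measure ℝ := μ.map (s 0) with hν
  have hνprob : IsProbabilityMeasure ν := Measure.isProbabilityMeasure_map (hmeas 0).aemeasurable
  have hνatoms : NullSingletonClass ν := by
    refine ⟨fun x => ?_⟩
    rw [hν, Measure.map_apply (hmeas 0) (measurableSet_singleton x)]
    exact hatomless x
  set π : Measure (Fin (n + 1) → ℝ) := Measure.pi (fun _ => ν) with hπ
  have hπprob : IsProbabilityMeasure π := by infer_instance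
  set S : Ω → (Fin (n + 1) → ℝ) := fun ω i => s i ω with hSdef
  have hS : Measurable S := measurable_pi_lambda _ hmeas
  -- joint law is the product measure
  have hmap : μ.map S = π := by
    refine (Measure.pi_eq fun t ht => ?_).symm
    rw [Measure.map_apply hS (MeasurableSet.univ_pi ht)]
    have hpre : S ⁻¹' Set.univ.pi t = ⋂ i ∈ Finset.univ, s i ⁻¹' t i := by
      ext ω; simp [Set.mem_pi, hSdef]
    rw [hpre, hindep.measure_inter_preimage_eq_mul Finset.univ (fun i _ => ht i)]
    refine Finset.prod_congr rfl fun i _ => ?_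
    rw [← Measure.map_apply (hmeas i) (ht i), hident i]
  -- the good set of injective tuples
  set G : Set (Fin (n + 1) → ℝ) := ⋂ (i) (j) (_ : i ≠ j), {x | x i ≠ x j} with hGdef
  have hGinj : ∀ x, x ∈ G ↔ Function.Injective x := by
    intro x
    simp only [hGdef, Set.mem_iInter, Set.mem_setOf_eq]
    constructor
    · intro h a b hab
      by_contra hne
      exact h a b hne hab
    · intro h a b hne hab
      exact hne (h hab)
  have hGmeas : MeasurableSet G := by
    refine MeasurableSet.iInter fun i => MeasurableSet.iInter fun j =>
      MeasurableSet.iInter fun _ => ?_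
    exact (measurableSet_eq_fun (measurable_pi_apply i) (measurable_pi_apply j)).compl
  have hGc : π Gᶜ = 0 := by
    have : Gᶜ = ⋃ (i) (j) (_ : i ≠ j), {x : Fin (n+1) → ℝ | x i = x j} := by
      ext x
      simp [hGdef]
    rw [this]
    refine measure_iUnion_null fun i => measure_iUnion_null fun j => measure_iUnion_null fun h => ?_
    exact diag_null ν h
  have hG1 : π G = 1 := by
    rw [← prob_compl_eq_zero_iff hGmeas]
    exact hGc
  set D : Fin (n + 1) → ℕ → Set (Fin (n + 1) → ℝ) := fun i r => (fun x => rnk x i) ⁻¹' {r}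
    with hDdef
  have hDmeas : ∀ i r, MeasurableSet (D i r) := fun i r =>
    rnk_measurable i (measurableSet_singleton r)
  -- swap invariance
  have hswap : ∀ (r : ℕ) (i i' : Fin (n + 1)), π (D i r ∩ G) = π (D i' r ∩ G) := by
    intro r i i'
    set σ : Equiv.Perm (Fin (n + 1)) := Equiv.swap i i' with hσ
    have hmp : MeasurePreserving
        (⇑(MeasurableEquiv.piCongrLeft (fun _ : Fin (n+1) => ℝ) σ)) π π :=
      measurePreserving_piCongrLeft (fun _ => ν) σ
    have hT : ∀ x : Fin (n+1) → ℝ,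
        (MeasurableEquiv.piCongrLeft (fun _ : Fin (n+1) => ℝ) σ) x = x ∘ ⇑σ.symm := by
      intro x; funext l
      rw [MeasurableEquiv.coe_piCongrLeft]
      conv_lhs => rw [← Equiv.apply_symm_apply σ l]
      rw [Equiv.piCongrLeft_apply_apply]
      rfl
    have hpre : (⇑(MeasurableEquiv.piCongrLeft (fun _ : Fin (n+1) => ℝ) σ)) ⁻¹' (D i' r ∩ G)
        = D i r ∩ G := by
      ext x
      simp only [Set.mem_preimage, Set.mem_inter_iff, hT]
      have h1 : rnk (x ∘ ⇑σ.symm) i' = rnk x i := by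
        rw [rnk_comp]
        congr 1
        simp [hσ, Equiv.symm_apply_eq]
      have h2 : (x ∘ ⇑σ.symm) ∈ G ↔ x ∈ G := by
        rw [hGinj, hGinj]
        exact (Equiv.injective_comp σ.symm x)
      have h3 : (x ∘ ⇑σ.symm) ∈ D i' r ↔ x ∈ D i r := by
        simp only [hDdef, Set.mem_preimage, Set.mem_singleton_iff, h1]
      rw [h3, h2]
    have := hmp.measure_preimage ((hDmeas i' r).inter hGmeas).nullMeasurableSet
    rw [hpre] at this
    exact this
  -- each rank class has measure 1/(n+1)
  have huni : ∀ r, r < n + 1 → ∀ i, π (D i r ∩ G) = ((n + 1 : ℕ) : ENNReal)⁻¹ := by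
    intro r hr i
    have hcover : G = ⋃ i', D i' r ∩ G := by
      ext x
      simp only [Set.mem_iUnion, Set.mem_inter_iff]
      constructor
      · intro hx
        obtain ⟨i', hi'⟩ := rnk_surj x ((hGinj x).1 hx) r hr
        exact ⟨i', by simp [hDdef, hi'], hx⟩
      · rintro ⟨_, _, hx⟩; exact hx
    have hdisj : Pairwise (Function.onFun Disjoint fun i' => D i' r ∩ G) := by
      intro a b hab
      refine Set.disjoint_left.2 ?_
      rintro x ⟨hxa, hxg⟩ ⟨hxb, _⟩
      apply hab
      simp only [hDdef, Set.mem_preimage, Set.mem_singleton_iff] at hxa hxb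
      exact rnk_injective x ((hGinj x).1 hxg) (by rw [hxa, hxb])
    have hsum : ∑ i' : Fin (n+1), π (D i' r ∩ G) = 1 := by
      rw [← tsum_fintype (L := SummationFilter.unconditional _), ← measure_iUnion hdisj (fun i' => (hDmeas i' r).inter hGmeas),
        ← hcover, hG1]
    have hall : ∀ i', π (D i' r ∩ G) = π (D i r ∩ G) := fun i' => hswap r i' i
    rw [Finset.sum_congr rfl (fun i' _ => hall i'), Finset.sum_const, Finset.card_univ,
      Fintype.card_fin, nsmul_eq_mul] at hsum
    have hne : ((n + 1 : ℕ) : ENNReal) ≠ 0 := by simp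
    have hnt : ((n + 1 : ℕ) : ENNReal) ≠ ⊤ := by simp
    calc π (D i r ∩ G)
        = ((n + 1 : ℕ) : ENNReal)⁻¹ * (((n + 1 : ℕ) : ENNReal) * π (D i r ∩ G)) := by
          rw [← mul_assoc, ENNReal.inv_mul_cancel hne hnt, one_mul]
      _ = ((n + 1 : ℕ) : ENNReal)⁻¹ := by
          rw [show ((n + 1 : ℕ) : ENNReal) * π (D i r ∩ G) = 1 from by exact_mod_cast hsum, mul_one]
  -- the event
  set Eset : Set (Fin (n+1) → ℝ) := ⋃ r ∈ Finset.range k, D (Fin.last n) r with hE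
  have hEmeas : MeasurableSet Eset :=
    MeasurableSet.biUnion (Finset.range k).countable_toSet (fun r _ => hDmeas _ r)
  have hset : {ω | s (Fin.last n) ω ≤ kthSmallest (fun i : Fin n => s i.castSucc ω) k}
      = S ⁻¹' Eset := by
    ext ω
    simp only [Set.mem_setOf_eq, Set.mem_preimage, hE, Set.mem_iUnion, hDdef,
      Set.mem_singleton_iff, Finset.mem_range]
    rw [le_kthSmallest_iff _ k hk1 hkn]
    have hcard : (Finset.univ.filter fun i : Fin n =>
        (fun i : Fin n => s i.castSucc ω) i < s (Fin.last n) ω).card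
        = rnk (S ω) (Fin.last n) := rnk_last (S ω)
    rw [hcard]
    constructor
    · intro h; exact ⟨rnk (S ω) (Fin.last n), h, rfl⟩
    · rintro ⟨r, hr, hrr⟩
      omega
  rw [hset, ← Measure.map_apply hS hEmeas, hmap]
  have hEG : π Eset = π (Eset ∩ G) := by
    apply le_antisymm
    · calc π Eset ≤ π ((Eset ∩ G) ∪ Gᶜ) := by
            apply measure_mono
            intro x hx
            by_cases hxg : x ∈ G
            · exact Or.inl ⟨hx, hxg⟩
            · exact Or.inr hxg
        _ ≤ π (Eset ∩ G) + π Gᶜ := measure_union_le _ _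
        _ = π (Eset ∩ G) := by rw [hGc, add_zero]
    · exact measure_mono Set.inter_subset_left
  have hsplit : Eset ∩ G = ⋃ r ∈ Finset.range k, (D (Fin.last n) r ∩ G) := by
    rw [hE]
    ext x
    simp only [Set.mem_inter_iff, Set.mem_iUnion, Finset.mem_range]
    tauto
  have hdisj' : Set.PairwiseDisjoint ↑(Finset.range k)
      (fun r => D (Fin.last n) r ∩ G) := by
    intro a _ b _ hab
    refine Set.disjoint_left.2 ?_
    rintro x ⟨hxa, _⟩ ⟨hxb, _⟩
    simp only [hDdef, Set.mem_preimage, Set.mem_singleton_iff] at hxa hxb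
    exact hab (hxa ▸ hxb ▸ rfl)
  rw [hEG, hsplit, measure_biUnion_finset hdisj' (fun r _ => (hDmeas _ r).inter hGmeas)]
  have hterm : ∀ r ∈ Finset.range k, π (D (Fin.last n) r ∩ G) = ((n + 1 : ℕ) : ENNReal)⁻¹ := by
    intro r hr
    exact huni r (by simp at hr; omega) _
  rw [Finset.sum_congr rfl hterm, Finset.sum_const, Finset.card_range, nsmul_eq_mul,
    ENNReal.toReal_mul, ENNReal.toReal_inv]
  simp only [ENNReal.toReal_natCast]
  rw [div_eq_mul_inv]
  push_cast
  ring
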